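/- The n-species ASEP on the finite lattice {1,…,L} with closed boundaries is self-dual: its generator L_ASEP satisfies the matrix identity L_ASEP · D = D · L_ASEPᵀ, where D is the matrix indexed by pairs of configurations defined by D(η,ξ) := ∏_{k=1}^{n} ∏_{x ∈ A_k(ξ)} 1[η(x) ≥ k] · q^{−2x − 2·Σ_{j=k}^{n} N→_x^j(η)}. -/

import Mathlib

open Matrix BigOperators Finset

noncomputable section

namespace Stmt0

/-- Configurations of the `n`-species ASEP on sites `{1,…,L}` (site `x : Fin L`
represents the lattice site `x.val + 1`); value `0` is a hole, value `k ≥ 1` a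
particle of species `k`. -/
abbrev Conf (n L : ℕ) := Fin L → Fin (n + 1)

/-- Off-diagonal jump rates: a swap at an adjacent bond `(x, x+1)` happens at rate
`q²` if the left value is larger, and at rate `1` if the right value is larger. -/
def offdiag (n L : ℕ) (q : ℝ) (η η' : Conf n L) : ℝ :=
  ∑ x : Fin L,
    if h : (x : ℕ) + 1 < L then
      (if η' = η ∘ Equiv.swap x ⟨(x : ℕ) + 1, h⟩ ∧ η x ≠ η ⟨(x : ℕ) + 1, h⟩ then
        (if η ⟨(x : ℕ) + 1, h⟩ < η x then q ^ 2 else 1)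
      else 0)
    else 0

/-- The generator of the `n`-species ASEP on `{1,…,L}` with closed boundaries:
off-diagonal entries are the jump rates, and diagonal entries make every row sum to `0`. -/
def gen (n L : ℕ) (q : ℝ) : Matrix (Conf n L) (Conf n L) ℝ :=
  fun η η' =>
    if η' = η then
      -∑ η'' : Conf n L, (if η'' = η then 0 else offdiag n L q η η'')
    else offdiag n L q η η'

/-- `Nright n L η x j` is the number of species-`j` particles of `η` strictly to the
right of site `x`. -/
def Nright (n L : ℕ) (η : Conf n L) (x : Fin L) (j : ℕ) : ℕ :=
  (Finset.univ.filter (fun y : Fin L => x < y ∧ (η y : ℕ) = j)).card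

/-- The duality function
`D(η,ξ) = ∏_{k=1}^{n} ∏_{x ∈ A_k(ξ)} 1[η(x) ≥ k] · q^{−2x − 2 Σ_{j=k}^{n} N→_x^j(η)}`,
where `A_k(ξ)` is the set of sites occupied in `ξ` by a species-`k` particle. -/
def dualFn (n L : ℕ) (q : ℝ) : Matrix (Conf n L) (Conf n L) ℝ :=
  fun η ξ =>
    ∏ k ∈ Finset.Icc 1 n,
      ∏ x ∈ Finset.univ.filter (fun x : Fin L => (ξ x : ℕ) = k),
        (if k ≤ (η x : ℕ) then (1 : ℝ) else 0) *
          q ^ (-(2 : ℤ) * (((x : ℕ) : ℤ) + 1) -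
            2 * ∑ j ∈ Finset.Icc k n, (Nright n L η x j : ℤ))

/-! ### Auxiliary definitions -/

def crat (q : ℝ) (a b : ℕ) : ℝ := if b < a then q ^ 2 else 1
def I (P : Prop) [Decidable P] : ℝ := if P then 1 else 0
def J (P : Prop) [Decidable P] : ℤ := if P then 1 else 0

def Ssum (n L : ℕ) (η : Conf n L) (y : Fin L) (k : ℕ) : ℤ :=
  ∑ j ∈ Finset.Icc k n, (Nright n L η y j : ℤ)

def G (n L : ℕ) (q : ℝ) (η : Conf n L) (y : Fin L) (k : ℕ) : ℝ :=
  if k = 0 then 1 else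
    I (k ≤ (η y : ℕ)) * q ^ (-(2 : ℤ) * (((y : ℕ) : ℤ) + 1) - 2 * Ssum n L η y k)

/-! ### The core scalar identity -/

lemma core (q : ℝ) (hq : q ≠ 0) (a b α β : ℕ) (E1 E2 F1 F2 : ℤ)
    (hF1 : F1 = E2 + 2) (hF2 : F2 = E1 - 2) :
    crat q a b *
      ((if α = 0 then 1 else I (α ≤ b) * q ^ (E1 - 2 * J (α ≤ a))) *
       (if β = 0 then 1 else I (β ≤ a) * q ^ E2)
     - (if α = 0 then 1 else I (α ≤ a) * q ^ (E1 - 2 * J (α ≤ b))) *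
       (if β = 0 then 1 else I (β ≤ b) * q ^ E2))
  = crat q α β *
      ((if β = 0 then 1 else I (β ≤ a) * q ^ (F1 - 2 * J (β ≤ b))) *
       (if α = 0 then 1 else I (α ≤ b) * q ^ F2)
     - (if α = 0 then 1 else I (α ≤ a) * q ^ (E1 - 2 * J (α ≤ b))) *
       (if β = 0 then 1 else I (β ≤ b) * q ^ E2)) := by
  subst hF1 hF2
  unfold crat I J
  simp only [show (q:ℝ)^2 = q^(2:ℤ) from by rw [pow_two, zpow_two]]
  split_ifs
  all_goals
    first
      | (exfalso; omega)
      | (simp only [mul_one, mul_zero, sub_zero, zpow_sub₀ hq, zpow_add₀ hq]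
         try field_simp
         try ring_nf)

/-! ### Properties of `Nright` and `Ssum` under a swap -/

lemma fin_ne_val {L : ℕ} {y x : Fin L} (h : y ≠ x) : (y : ℕ) ≠ (x : ℕ) :=
  fun hv => h (Fin.ext hv)

lemma Nright_swap (n L : ℕ) (η : Conf n L) (x : Fin L) (h : (x : ℕ) + 1 < L) (y : Fin L)
    (hy : y ≠ x) (j : ℕ) :
    Nright n L (η ∘ Equiv.swap x ⟨(x : ℕ) + 1, h⟩) y j = Nright n L η y j := by
  classical
  set x' : Fin L := ⟨(x : ℕ) + 1, h⟩ with hx'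
  have hy' : (y : ℕ) ≠ (x : ℕ) := fin_ne_val hy
  have hlt : ∀ z : Fin L, y < z ↔ y < Equiv.swap x x' z := by
    intro z
    rcases eq_or_ne z x with rfl | hzx
    · rw [Equiv.swap_apply_left]
      simp only [Fin.lt_def, hx']
      omega
    · rcases eq_or_ne z x' with rfl | hzx'
      · rw [Equiv.swap_apply_right]
        simp only [Fin.lt_def, hx']
        omega
      · rw [Equiv.swap_apply_of_ne_of_ne hzx hzx']
  unfold Nright
  refine Finset.card_bij' (fun z _ => Equiv.swap x x' z) (fun z _ => Equiv.swap x x' z)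
    ?_ ?_ ?_ ?_
  · intro z hz
    simp only [Finset.mem_filter, Finset.mem_univ, true_and] at hz ⊢
    exact ⟨(hlt z).1 hz.1, hz.2⟩
  · intro z hz
    simp only [Finset.mem_filter, Finset.mem_univ, true_and, Function.comp_apply,
      Equiv.swap_apply_self] at hz ⊢
    exact ⟨(hlt z).1 hz.1, hz.2⟩
  · intro z _; exact Equiv.swap_apply_self _ _ _
  · intro z _; exact Equiv.swap_apply_self _ _ _

lemma Nright_split (n L : ℕ) (η : Conf n L) (x : Fin L) (h : (x : ℕ) + 1 < L) (j : ℕ) :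
    Nright n L η x j
      = Nright n L η ⟨(x : ℕ) + 1, h⟩ j
        + (if (η ⟨(x : ℕ) + 1, h⟩ : ℕ) = j then 1 else 0) := by
  classical
  set x' : Fin L := ⟨(x : ℕ) + 1, h⟩ with hx'
  unfold Nright
  have hsplit : (Finset.univ.filter (fun z : Fin L => x < z ∧ (η z : ℕ) = j))
      = (Finset.univ.filter (fun z : Fin L => x' < z ∧ (η z : ℕ) = j))
        ∪ (Finset.univ.filter (fun z : Fin L => z = x' ∧ (η z : ℕ) = j)) := by
    rw [← Finset.filter_or]
    apply Finset.filter_congr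
    intro z _
    have harith : x < z ↔ (x' < z ∨ z = x') := by
      simp only [Fin.lt_def, hx', Fin.ext_iff]
      omega
    tauto
  rw [hsplit, Finset.card_union_of_disjoint]
  · congr 1
    by_cases hj : (η x' : ℕ) = j
    · rw [if_pos hj]
      have hset : Finset.univ.filter (fun z : Fin L => z = x' ∧ (η z : ℕ) = j) = {x'} := by
        ext z
        simp only [Finset.mem_filter, Finset.mem_univ, true_and, Finset.mem_singleton]
        constructor
        · exact fun hz => hz.1
        · rintro rfl; exact ⟨rfl, hj⟩
      rw [hset, Finset.card_singleton]
    · rw [if_neg hj]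
      have hset : Finset.univ.filter (fun z : Fin L => z = x' ∧ (η z : ℕ) = j) = ∅ := by
        ext z
        simp only [Finset.mem_filter, Finset.mem_univ, true_and, Finset.notMem_empty,
          iff_false, not_and]
        rintro rfl; exact hj
      rw [hset, Finset.card_empty]
  · rw [Finset.disjoint_left]
    intro z hz1 hz2
    simp only [Finset.mem_filter, Finset.mem_univ, true_and] at hz1 hz2
    rw [hz2.1] at hz1
    exact lt_irrefl x' hz1.1

lemma Ssum_swap (n L : ℕ) (η : Conf n L) (x : Fin L) (h : (x : ℕ) + 1 < L) (y : Fin L)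
    (hy : y ≠ x) (k : ℕ) :
    Ssum n L (η ∘ Equiv.swap x ⟨(x : ℕ) + 1, h⟩) y k = Ssum n L η y k :=
  Finset.sum_congr rfl fun j _ => by rw [Nright_swap n L η x h y hy j]

lemma Ssum_split (n L : ℕ) (η : Conf n L) (x : Fin L) (h : (x : ℕ) + 1 < L) (k : ℕ) :
    Ssum n L η x k
      = Ssum n L η ⟨(x : ℕ) + 1, h⟩ k + J (k ≤ (η ⟨(x : ℕ) + 1, h⟩ : ℕ)) := by
  classical
  set x' : Fin L := ⟨(x : ℕ) + 1, h⟩ with hx'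
  unfold Ssum
  have hterm : ∀ j ∈ Finset.Icc k n,
      (Nright n L η x j : ℤ)
        = (Nright n L η x' j : ℤ) + (if (η x' : ℕ) = j then (1 : ℤ) else 0) := by
    intro j _
    rw [Nright_split n L η x h j]
    push_cast
    split_ifs <;> simp [hx']
  rw [Finset.sum_congr rfl hterm, Finset.sum_add_distrib, Finset.sum_ite_eq]
  have hmem : ((η x' : ℕ) ∈ Finset.Icc k n) ↔ (k ≤ (η x' : ℕ)) := by
    rw [Finset.mem_Icc]
    exact and_iff_left (Fin.is_le _)
  unfold J
  rw [if_congr hmem rfl rfl]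

/-! ### Product form of the duality function -/

lemma dual_prod (n L : ℕ) (q : ℝ) (η ξ : Conf n L) :
    dualFn n L q η ξ = ∏ y : Fin L, G n L q η y ((ξ y : ℕ)) := by
  classical
  unfold dualFn
  simp only [Finset.prod_filter]
  rw [Finset.prod_comm]
  refine Finset.prod_congr rfl fun y _ => ?_
  rw [Finset.prod_ite_eq]
  by_cases h0 : (ξ y : ℕ) = 0
  · rw [G, if_pos h0, if_neg]
    rw [Finset.mem_Icc, h0]
    omega
  · rw [G, if_neg h0, if_pos]
    · rfl
    · exact Finset.mem_Icc.2 ⟨Nat.one_le_iff_ne_zero.2 h0, Fin.is_le _⟩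

/-! ### Local values of `G` at a bond -/

section Bond

variable (n L : ℕ) (q : ℝ) (η : Conf n L) (x : Fin L) (h : (x : ℕ) + 1 < L)

lemma G_at_x (k : ℕ) :
    G n L q η x k
      = if k = 0 then 1 else
          I (k ≤ (η x : ℕ)) *
            q ^ ((-(2 : ℤ) * (((x : ℕ) : ℤ) + 1) - 2 * Ssum n L η ⟨(x : ℕ) + 1, h⟩ k)
              - 2 * J (k ≤ (η ⟨(x : ℕ) + 1, h⟩ : ℕ))) := by
  unfold G
  rcases eq_or_ne k 0 with rfl | hk
  · simp
  · rw [if_neg hk, if_neg hk, Ssum_split n L η x h k]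
    congr 1
    congr 1
    ring

lemma G_at_x' (k : ℕ) :
    G n L q η ⟨(x : ℕ) + 1, h⟩ k
      = if k = 0 then 1 else
          I (k ≤ (η ⟨(x : ℕ) + 1, h⟩ : ℕ)) *
            q ^ (-(2 : ℤ) * ((((⟨(x : ℕ) + 1, h⟩ : Fin L) : ℕ) : ℤ) + 1)
              - 2 * Ssum n L η ⟨(x : ℕ) + 1, h⟩ k) := rfl

lemma G_swap_at_x (k : ℕ) :
    G n L q (η ∘ Equiv.swap x ⟨(x : ℕ) + 1, h⟩) x k
      = if k = 0 then 1 else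
          I (k ≤ (η ⟨(x : ℕ) + 1, h⟩ : ℕ)) *
            q ^ ((-(2 : ℤ) * (((x : ℕ) : ℤ) + 1) - 2 * Ssum n L η ⟨(x : ℕ) + 1, h⟩ k)
              - 2 * J (k ≤ (η x : ℕ))) := by
  have hxx' : x ≠ (⟨(x : ℕ) + 1, h⟩ : Fin L) := by
    intro he
    have := congrArg Fin.val he
    simp at this
  rw [G_at_x n L q _ x h k]
  rcases eq_or_ne k 0 with rfl | hk
  · simp
  · rw [if_neg hk, if_neg hk]
    rw [Ssum_swap n L η x h _ (Ne.symm hxx') k]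
    have h1 : ((η ∘ Equiv.swap x ⟨(x : ℕ) + 1, h⟩) x : ℕ) = (η ⟨(x : ℕ) + 1, h⟩ : ℕ) := by
      simp [Equiv.swap_apply_left]
    have h2 : ((η ∘ Equiv.swap x ⟨(x : ℕ) + 1, h⟩) ⟨(x : ℕ) + 1, h⟩ : ℕ) = (η x : ℕ) := by
      simp [Equiv.swap_apply_right]
    rw [h1, h2]

lemma G_swap_at_x' (k : ℕ) :
    G n L q (η ∘ Equiv.swap x ⟨(x : ℕ) + 1, h⟩) ⟨(x : ℕ) + 1, h⟩ k
      = if k = 0 then 1 else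
          I (k ≤ (η x : ℕ)) *
            q ^ (-(2 : ℤ) * ((((⟨(x : ℕ) + 1, h⟩ : Fin L) : ℕ) : ℤ) + 1)
              - 2 * Ssum n L η ⟨(x : ℕ) + 1, h⟩ k) := by
  have hxx' : x ≠ (⟨(x : ℕ) + 1, h⟩ : Fin L) := by
    intro he
    have := congrArg Fin.val he
    simp at this
  rw [G_at_x' n L q _ x h k]
  rcases eq_or_ne k 0 with rfl | hk
  · simp
  · rw [if_neg hk, if_neg hk]
    rw [Ssum_swap n L η x h _ (Ne.symm hxx') k]
    have h2 : ((η ∘ Equiv.swap x ⟨(x : ℕ) + 1, h⟩) ⟨(x : ℕ) + 1, h⟩ : ℕ) = (η x : ℕ) := by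
      simp [Equiv.swap_apply_right]
    rw [h2]

end Bond

/-! ### Splitting a product over sites at a bond -/

lemma prod_split (L : ℕ) (x x' : Fin L) (hxx' : x ≠ x') (f : Fin L → ℝ) :
    ∏ y : Fin L, f y
      = f x * f x' * ∏ y ∈ Finset.univ.filter (fun y => ¬(y = x ∨ y = x')), f y := by
  classical
  rw [← Finset.prod_filter_mul_prod_filter_not Finset.univ (fun y => y = x ∨ y = x') f]
  congr 1
  have hset : Finset.univ.filter (fun y : Fin L => y = x ∨ y = x') = {x, x'} := by
    ext z
    simp [Finset.mem_insert]
  rw [hset, Finset.prod_pair hxx']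

/-! ### The bond-local duality identity -/

lemma bond (n L : ℕ) (q : ℝ) (hq : q ≠ 0) (η ξ : Conf n L) (x : Fin L)
    (h : (x : ℕ) + 1 < L) :
    crat q (η x) (η ⟨(x : ℕ) + 1, h⟩) *
      (dualFn n L q (η ∘ Equiv.swap x ⟨(x : ℕ) + 1, h⟩) ξ - dualFn n L q η ξ)
  = crat q (ξ x) (ξ ⟨(x : ℕ) + 1, h⟩) *
      (dualFn n L q η (ξ ∘ Equiv.swap x ⟨(x : ℕ) + 1, h⟩) - dualFn n L q η ξ) := by
  classical
  have hxx' : x ≠ (⟨(x : ℕ) + 1, h⟩ : Fin L) := by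
    intro he
    have := congrArg Fin.val he
    simp at this
  have hc1 : ((ξ ∘ Equiv.swap x ⟨(x : ℕ) + 1, h⟩) x : ℕ) = (ξ ⟨(x : ℕ) + 1, h⟩ : ℕ) := by
    simp [Equiv.swap_apply_left]
  have hc2 : ((ξ ∘ Equiv.swap x ⟨(x : ℕ) + 1, h⟩) ⟨(x : ℕ) + 1, h⟩ : ℕ) = (ξ x : ℕ) := by
    simp [Equiv.swap_apply_right]
  have hR1 : ∏ y ∈ Finset.univ.filter
        (fun y : Fin L => ¬(y = x ∨ y = (⟨(x : ℕ) + 1, h⟩ : Fin L))),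
        G n L q (η ∘ Equiv.swap x ⟨(x : ℕ) + 1, h⟩) y ((ξ y : ℕ))
      = ∏ y ∈ Finset.univ.filter
        (fun y : Fin L => ¬(y = x ∨ y = (⟨(x : ℕ) + 1, h⟩ : Fin L))),
        G n L q η y ((ξ y : ℕ)) := by
    refine Finset.prod_congr rfl fun y hy => ?_
    simp only [Finset.mem_filter, Finset.mem_univ, true_and, not_or] at hy
    unfold G
    rw [Ssum_swap n L η x h y hy.1 ((ξ y : ℕ))]
    rw [show ((η ∘ Equiv.swap x ⟨(x : ℕ) + 1, h⟩) y) = η y from by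
      simp [Equiv.swap_apply_of_ne_of_ne hy.1 hy.2]]
  have hR2 : ∏ y ∈ Finset.univ.filter
        (fun y : Fin L => ¬(y = x ∨ y = (⟨(x : ℕ) + 1, h⟩ : Fin L))),
        G n L q η y (((ξ ∘ Equiv.swap x ⟨(x : ℕ) + 1, h⟩) y : ℕ))
      = ∏ y ∈ Finset.univ.filter
        (fun y : Fin L => ¬(y = x ∨ y = (⟨(x : ℕ) + 1, h⟩ : Fin L))),
        G n L q η y ((ξ y : ℕ)) := by
    refine Finset.prod_congr rfl fun y hy => ?_
    simp only [Finset.mem_filter, Finset.mem_univ, true_and, not_or] at hy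
    rw [show ((ξ ∘ Equiv.swap x ⟨(x : ℕ) + 1, h⟩) y) = ξ y from by
      simp [Equiv.swap_apply_of_ne_of_ne hy.1 hy.2]]
  simp only [dual_prod]
  rw [prod_split L x ⟨(x : ℕ) + 1, h⟩ hxx', prod_split L x ⟨(x : ℕ) + 1, h⟩ hxx',
    prod_split L x ⟨(x : ℕ) + 1, h⟩ hxx']
  rw [hc1, hc2, hR1, hR2]
  rw [G_swap_at_x n L q η x h, G_swap_at_x' n L q η x h, G_at_x n L q η x h,
    G_at_x n L q η x h, G_at_x' n L q η x h, G_at_x' n L q η x h]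
  have hF1 : (-(2 : ℤ) * (((x : ℕ) : ℤ) + 1)
        - 2 * Ssum n L η ⟨(x : ℕ) + 1, h⟩ ((ξ ⟨(x : ℕ) + 1, h⟩ : ℕ)))
      = (-(2 : ℤ) * ((((⟨(x : ℕ) + 1, h⟩ : Fin L) : ℕ) : ℤ) + 1)
        - 2 * Ssum n L η ⟨(x : ℕ) + 1, h⟩ ((ξ ⟨(x : ℕ) + 1, h⟩ : ℕ))) + 2 := by
    push_cast
    ring
  have hF2 : (-(2 : ℤ) * ((((⟨(x : ℕ) + 1, h⟩ : Fin L) : ℕ) : ℤ) + 1)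
        - 2 * Ssum n L η ⟨(x : ℕ) + 1, h⟩ ((ξ x : ℕ)))
      = (-(2 : ℤ) * (((x : ℕ) : ℤ) + 1)
        - 2 * Ssum n L η ⟨(x : ℕ) + 1, h⟩ ((ξ x : ℕ))) - 2 := by
    push_cast
    ring
  linear_combination
    (∏ y ∈ Finset.univ.filter
        (fun y : Fin L => ¬(y = x ∨ y = (⟨(x : ℕ) + 1, h⟩ : Fin L))),
        G n L q η y ((ξ y : ℕ))) *
      core q hq ((η x : ℕ)) ((η ⟨(x : ℕ) + 1, h⟩ : ℕ)) ((ξ x : ℕ)) ((ξ ⟨(x : ℕ) + 1, h⟩ : ℕ))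
        (-(2 : ℤ) * (((x : ℕ) : ℤ) + 1) - 2 * Ssum n L η ⟨(x : ℕ) + 1, h⟩ ((ξ x : ℕ)))
        (-(2 : ℤ) * ((((⟨(x : ℕ) + 1, h⟩ : Fin L) : ℕ) : ℤ) + 1)
          - 2 * Ssum n L η ⟨(x : ℕ) + 1, h⟩ ((ξ ⟨(x : ℕ) + 1, h⟩ : ℕ)))
        (-(2 : ℤ) * (((x : ℕ) : ℤ) + 1)
          - 2 * Ssum n L η ⟨(x : ℕ) + 1, h⟩ ((ξ ⟨(x : ℕ) + 1, h⟩ : ℕ)))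
        (-(2 : ℤ) * ((((⟨(x : ℕ) + 1, h⟩ : Fin L) : ℕ) : ℤ) + 1)
          - 2 * Ssum n L η ⟨(x : ℕ) + 1, h⟩ ((ξ x : ℕ)))
        hF1 hF2

/-! ### Matrix algebra: reduction to bond terms -/

lemma offdiag_self (n L : ℕ) (q : ℝ) (η : Conf n L) : offdiag n L q η η = 0 := by
  unfold offdiag
  refine Finset.sum_eq_zero fun x _ => ?_
  split_ifs with h hc hlt
  · exfalso
    apply hc.2
    have := congrFun hc.1 x
    simpa [Equiv.swap_apply_left] using this
  · exfalso
    apply hc.2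
    have := congrFun hc.1 x
    simpa [Equiv.swap_apply_left] using this
  · rfl
  · rfl

lemma gen_eq (n L : ℕ) (q : ℝ) (η η' : Conf n L) :
    gen n L q η η'
      = offdiag n L q η η'
        - (if η' = η then ∑ η'' : Conf n L, offdiag n L q η η'' else 0) := by
  classical
  unfold gen
  rcases eq_or_ne η' η with rfl | hne
  · rw [if_pos rfl, if_pos rfl]
    have hsum : ∑ η'' : Conf n L, (if η'' = η' then (0:ℝ) else offdiag n L q η' η'')
        = ∑ η'' : Conf n L, offdiag n L q η' η'' := by
      refine Finset.sum_congr rfl fun η'' _ => ?_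
      split_ifs with hh
      · rw [hh, offdiag_self]
      · rfl
    rw [hsum, offdiag_self]
    ring
  · rw [if_neg hne, if_neg hne, sub_zero]

lemma entry_L (n L : ℕ) (q : ℝ) (η ξ : Conf n L) :
    (gen n L q * dualFn n L q) η ξ
      = ∑ η' : Conf n L, offdiag n L q η η' * (dualFn n L q η' ξ - dualFn n L q η ξ) := by
  classical
  rw [Matrix.mul_apply]
  simp only [gen_eq, sub_mul, mul_sub]
  rw [Finset.sum_sub_distrib, Finset.sum_sub_distrib]
  congr 1
  have h1 : ∀ η' : Conf n L,
      (if η' = η then (∑ η'' : Conf n L, offdiag n L q η η'') else 0) * dualFn n L q η' ξ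
        = (if η' = η then (∑ η'' : Conf n L, offdiag n L q η η'') * dualFn n L q η ξ else 0) := by
    intro η'
    split_ifs with hh
    · rw [hh]
    · rw [zero_mul]
  rw [Finset.sum_congr rfl fun η' _ => h1 η', Finset.sum_ite_eq' Finset.univ η,
    if_pos (Finset.mem_univ η), ← Finset.sum_mul]

lemma entry_R (n L : ℕ) (q : ℝ) (η ξ : Conf n L) :
    (dualFn n L q * (gen n L q)ᵀ) η ξ
      = ∑ ξ' : Conf n L, offdiag n L q ξ ξ' * (dualFn n L q η ξ' - dualFn n L q η ξ) := by
  classical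
  rw [Matrix.mul_apply]
  simp only [Matrix.transpose_apply, gen_eq, mul_sub, sub_mul]
  rw [Finset.sum_sub_distrib, Finset.sum_sub_distrib]
  congr 1
  · refine Finset.sum_congr rfl fun ξ' _ => ?_
    ring
  · have h1 : ∀ ξ' : Conf n L,
        dualFn n L q η ξ' * (if ξ' = ξ then (∑ ξ'' : Conf n L, offdiag n L q ξ ξ'') else 0)
          = (if ξ' = ξ then dualFn n L q η ξ * (∑ ξ'' : Conf n L, offdiag n L q ξ ξ'') else 0) := by
      intro ξ'
      split_ifs with hh
      · rw [hh]
      · rw [mul_zero]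
    rw [Finset.sum_congr rfl fun ξ' _ => h1 ξ', Finset.sum_ite_eq' Finset.univ ξ,
      if_pos (Finset.mem_univ ξ), ← Finset.sum_mul]
    ring

lemma offdiag_sum (n L : ℕ) (q : ℝ) (η : Conf n L) (F : Conf n L → ℝ) :
    ∑ η' : Conf n L, offdiag n L q η η' * F η'
      = ∑ x : Fin L,
          (if h : (x : ℕ) + 1 < L then
            (if η x ≠ η ⟨(x : ℕ) + 1, h⟩ then
              (if η ⟨(x : ℕ) + 1, h⟩ < η x then q ^ 2 else 1) *
                F (η ∘ Equiv.swap x ⟨(x : ℕ) + 1, h⟩)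
            else 0)
          else 0) := by
  classical
  unfold offdiag
  simp only [Finset.sum_mul]
  rw [Finset.sum_comm]
  refine Finset.sum_congr rfl fun x _ => ?_
  by_cases h : (x : ℕ) + 1 < L
  · simp only [dif_pos h]
    have hterm : ∀ η' : Conf n L,
        (if η' = η ∘ Equiv.swap x ⟨(x : ℕ) + 1, h⟩ ∧ η x ≠ η ⟨(x : ℕ) + 1, h⟩ then
            (if η ⟨(x : ℕ) + 1, h⟩ < η x then q ^ 2 else 1) else 0) * F η'
          = (if η' = η ∘ Equiv.swap x ⟨(x : ℕ) + 1, h⟩ then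
              (if η x ≠ η ⟨(x : ℕ) + 1, h⟩ then
                (if η ⟨(x : ℕ) + 1, h⟩ < η x then q ^ 2 else 1) * F η'
              else 0)
            else 0) := by
      intro η'
      by_cases h1 : η' = η ∘ Equiv.swap x ⟨(x : ℕ) + 1, h⟩ <;>
        by_cases h2 : η x ≠ η ⟨(x : ℕ) + 1, h⟩ <;>
          simp [h1, h2]
    rw [Finset.sum_congr rfl fun η' _ => hterm η', Finset.sum_ite_eq' Finset.univ _,
      if_pos (Finset.mem_univ _)]
  · simp only [dif_neg h, zero_mul, Finset.sum_const_zero]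

lemma comp_swap_eq {n L : ℕ} (η : Conf n L) (x x' : Fin L) (he : η x = η x') :
    η ∘ Equiv.swap x x' = η := by
  funext z
  rcases eq_or_ne z x with rfl | h1
  · simp only [Function.comp_apply, Equiv.swap_apply_left]
    exact he.symm
  · rcases eq_or_ne z x' with rfl | h2
    · simp only [Function.comp_apply, Equiv.swap_apply_right]
      exact he
    · simp [Equiv.swap_apply_of_ne_of_ne h1 h2]

/-- **Self-duality of the multi-species ASEP** (Theorem 1.2 in the paper):
the generator `L_ASEP` of the `n`-species ASEP on `{1,…,L}` with closed boundaries
satisfies `L_ASEP · D = D · L_ASEPᵀ` for the duality function `D` above. -/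
theorem multispecies_ASEP_self_duality (n L : ℕ) (hn : 1 ≤ n) (hL : 2 ≤ L)
    (q : ℝ) (hq0 : 0 < q) (hq1 : q < 1) :
    gen n L q * dualFn n L q = dualFn n L q * (gen n L q)ᵀ := by
  classical
  ext η ξ
  rw [entry_L, entry_R, offdiag_sum, offdiag_sum]
  refine Finset.sum_congr rfl fun x _ => ?_
  by_cases h : (x : ℕ) + 1 < L
  · rw [dif_pos h, dif_pos h]
    have hcr : ∀ σ : Conf n L,
        (if σ ⟨(x : ℕ) + 1, h⟩ < σ x then q ^ 2 else 1)
          = crat q ((σ x : ℕ)) ((σ ⟨(x : ℕ) + 1, h⟩ : ℕ)) := by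
      intro σ
      unfold crat
      exact if_congr (by exact Iff.rfl) rfl rfl
    have hLhs : (if η x ≠ η ⟨(x : ℕ) + 1, h⟩ then
          (if η ⟨(x : ℕ) + 1, h⟩ < η x then q ^ 2 else 1) *
            (dualFn n L q (η ∘ Equiv.swap x ⟨(x : ℕ) + 1, h⟩) ξ - dualFn n L q η ξ)
        else 0)
        = crat q ((η x : ℕ)) ((η ⟨(x : ℕ) + 1, h⟩ : ℕ)) *
            (dualFn n L q (η ∘ Equiv.swap x ⟨(x : ℕ) + 1, h⟩) ξ - dualFn n L q η ξ) := by
      by_cases hne : η x ≠ η ⟨(x : ℕ) + 1, h⟩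
      · rw [if_pos hne, hcr η]
      · rw [if_neg hne]
        push_neg at hne
        rw [comp_swap_eq η x ⟨(x : ℕ) + 1, h⟩ hne]
        ring
    have hRhs : (if ξ x ≠ ξ ⟨(x : ℕ) + 1, h⟩ then
          (if ξ ⟨(x : ℕ) + 1, h⟩ < ξ x then q ^ 2 else 1) *
            (dualFn n L q η (ξ ∘ Equiv.swap x ⟨(x : ℕ) + 1, h⟩) - dualFn n L q η ξ)
        else 0)
        = crat q ((ξ x : ℕ)) ((ξ ⟨(x : ℕ) + 1, h⟩ : ℕ)) *
            (dualFn n L q η (ξ ∘ Equiv.swap x ⟨(x : ℕ) + 1, h⟩) - dualFn n L q η ξ) := by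
      by_cases hne : ξ x ≠ ξ ⟨(x : ℕ) + 1, h⟩
      · rw [if_pos hne, hcr ξ]
      · rw [if_neg hne]
        push_neg at hne
        rw [comp_swap_eq ξ x ⟨(x : ℕ) + 1, h⟩ hne]
        ring
    rw [hLhs, hRhs]
    exact bond n L q (ne_of_gt hq0) η ξ x h
  · rw [dif_neg h, dif_neg h]


end Stmt0

end
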